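/- Let D be a bounded convex open subset of ℂ and p a polynomial of degree n ≥ 1 all of whose roots lie in the closure of D. Then all roots of p' lie in the closure of D. -/

import Mathlib

open Polynomial Finset

theorem stmt_14 (D : Set ℂ) (hD : IsOpen D) (hconv : Convex ℝ D)
    (hbd : Bornology.IsBounded D)
    (p : Polynomial ℂ) (n : ℕ) (hdeg : p.natDegree = n) (hn : 1 ≤ n)
    (hroots : ∀ z : ℂ, p.IsRoot z → z ∈ closure D) :
    ∀ z : ℂ, (Polynomial.derivative p).IsRoot z → z ∈ closure D := by
  classical
  intro z hz
  by_cases hpz : p.eval z = 0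
  · exact hroots z hpz
  have hp0 : p ≠ 0 := fun h => hpz (by simp [h])
  set R := p.roots with hR
  set t := R.toFinset with ht
  have hsplit : p = Polynomial.C p.leadingCoeff * (R.map fun r => X - Polynomial.C r).prod :=
    (Polynomial.C_leadingCoeff_mul_prod_multiset_X_sub_C
      (Polynomial.splits_iff_card_roots.mp (IsAlgClosed.splits p))).symm
  have ha : p.leadingCoeff ≠ 0 := Polynomial.leadingCoeff_ne_zero.2 hp0
  -- evaluation formula
  have hev : ∀ x : ℂ, p.eval x = p.leadingCoeff * ∏ r ∈ t, (x - r) ^ R.count r := by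
    intro x
    conv_lhs => rw [hsplit]
    rw [Finset.prod_multiset_map_count]
    simp [Finset.prod_pow_eq_pow_sum]
    rw [Polynomial.eval_prod]
    simp
    exact Or.inl rfl
  have hzr : ∀ r ∈ t, z - r ≠ 0 := by
    intro r hr
    have : p.eval r = 0 := Polynomial.isRoot_of_mem_roots (Multiset.mem_toFinset.mp hr)
    intro h
    exact hpz (by rw [sub_eq_zero] at h; rw [h]; exact this)
  -- logarithmic derivative computation
  have hld : logDeriv (fun x => p.eval x) z
      = ∑ r ∈ t, (R.count r : ℂ) * (z - r)⁻¹ := by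
    have hfe : (fun x => p.eval x)
        = fun x => p.leadingCoeff * ∏ r ∈ t, (x - r) ^ R.count r := funext hev
    rw [hfe, logDeriv_const_mul _ _ ha,
      logDeriv_prod (s := t) (f := fun r => fun x => (x - r) ^ R.count r) (x := z)
        (fun r hr => pow_ne_zero _ (hzr r hr))
        (fun r hr => (DifferentiableAt.sub_const differentiableAt_fun_id r).pow _)]
    refine Finset.sum_congr rfl fun r hr => ?_
    rw [logDeriv_fun_pow (DifferentiableAt.sub_const differentiableAt_fun_id r)]
    congr 1
    rw [logDeriv_apply]
    have : deriv (fun x : ℂ => x - r) z = 1 := by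
      simp [deriv_sub_const]
    rw [this, one_div]
  have hld0 : logDeriv (fun x => p.eval x) z = 0 := by
    rw [logDeriv_apply, Polynomial.deriv, hz, zero_div]
  have hS : ∑ r ∈ t, (R.count r : ℂ) * (z - r)⁻¹ = 0 := by rw [← hld, hld0]
  -- rewrite inverses using conjugates
  set w : ℂ → ℝ := fun r => (R.count r : ℝ) * (Complex.normSq (z - r))⁻¹ with hw
  have hS2 : ∑ r ∈ t, (w r : ℂ) * (z - r) = 0 := by
    have := congrArg (starRingEnd ℂ) hS
    rw [map_sum, map_zero] at this
    rw [← this]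
    refine Finset.sum_congr rfl fun r hr => ?_
    rw [map_mul, map_inv₀, Complex.conj_natCast]
    rw [Complex.inv_def]
    have : (starRingEnd ℂ) ((starRingEnd ℂ) (z - r)) = z - r := by
      rw [Complex.conj_conj]
    rw [this]
    push_cast [hw]
    rw [Complex.normSq_conj]
    ring
  have hwpos : ∀ r ∈ t, 0 < w r := by
    intro r hr
    apply mul_pos
    · exact_mod_cast Multiset.count_pos.mpr (Multiset.mem_toFinset.mp hr)
    · exact inv_pos.mpr (Complex.normSq_pos.mpr (hzr r hr))
  have htne : t.Nonempty := by
    have hcard : R.card = p.natDegree :=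
      (Polynomial.splits_iff_card_roots.mp (IsAlgClosed.splits p))
    have : R ≠ 0 := by
      intro h
      rw [h] at hcard
      simp at hcard
      omega
    obtain ⟨r, hr⟩ := Multiset.exists_mem_of_ne_zero this
    exact ⟨r, Multiset.mem_toFinset.mpr hr⟩
  have hWpos : 0 < ∑ r ∈ t, w r := Finset.sum_pos hwpos htne
  -- z is the center of mass of the roots
  have hz_cm : z = t.centerMass w id := by
    have hsum : ∑ r ∈ t, w r • (z - r) = 0 := by
      simp only [Complex.real_smul]; exact hS2
    have h3 : (∑ r ∈ t, w r) • z = ∑ r ∈ t, w r • r := by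
      have h2 : ∑ r ∈ t, w r • (z - r) = (∑ r ∈ t, w r) • z - ∑ r ∈ t, w r • r := by
        rw [Finset.sum_smul, ← Finset.sum_sub_distrib]
        exact Finset.sum_congr rfl fun r hr => smul_sub _ _ _
      rw [h2] at hsum
      exact sub_eq_zero.mp hsum
    rw [Finset.centerMass]
    simp only [id_eq]
    rw [← h3, inv_smul_smul₀ (ne_of_gt hWpos)]
  rw [hz_cm]
  exact (hconv.closure).centerMass_mem (fun r hr => (hwpos r hr).le) hWpos
    (fun r hr => hroots r (Polynomial.isRoot_of_mem_roots (Multiset.mem_toFinset.mp hr)))
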